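/- (Corollary 3.4) Let W^N = U(𝔫̄)/U(𝔫̄)𝔫̄₊, a left U(𝔫̄)-module, and let v = 1 + U(𝔫̄)𝔫̄₊ ∈ W^N (the principal subspace of the generalized Verma module, with the spaces W^N(λ_i) identified as U(𝔫̄)-modules). Then for every i = 1, …, l and every character ν : Q → ℂ^×, there is a unique ℂ-linear map ê : W^N → W^N such that ê(a · v) = τ_{λ_i,ν}(a) · v for all a ∈ U(𝔫̄₋), and this map satisfies ê(I_{λ_0} · v) ⊆ I_{λ_i} · v. -/

import Mathlib

/-- The data of a finite-dimensional complex simple Lie algebra `𝔤` of type `A`, `D` or `E`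
of rank `l`, recorded through: its Cartan matrix `M`; its set `Δ` of positive roots, each
written via its coordinates in the basis of simple roots (so the `i`-th simple root is
`Pi.single i 1`); and the affinization `𝔫̄ = 𝔫 ⊗ ℂ[t,t⁻¹]` of the nilpotent subalgebra
`𝔫 = ⊕_{α ∈ Δ} ℂx_α`, where `x α m` stands for `x_α ⊗ t^m`.  The weight lattice `P` is
identified with `ℤ^l` via `λ ↦ (⟨λ, α_j⟩)_j`, so that `⟨λ, α⟩ = ∑_j ⟨λ, α_j⟩ α^j` for a
positive root `α` with simple-root coordinates `α^j`; in particular `⟨λ_i, α⟩ = α^i` and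
`⟨α_i, α⟩ = ∑_j m_{ij} α^j`. -/
structure ADEContext where
  /-- the rank -/
  l : ℕ
  hl : 0 < l
  /-- the Cartan matrix -/
  M : Matrix (Fin l) (Fin l) ℤ
  M_symm : M.IsSymm
  M_diag : ∀ i, M i i = 2
  M_offdiag : ∀ i j, i ≠ j → M i j = 0 ∨ M i j = -1
  M_posdef : (M.map ((↑) : ℤ → ℝ)).PosDef
  /-- the set of positive roots, in simple-root coordinates -/
  Δ : Finset (Fin l → ℤ)
  Δ_nonneg : ∀ α ∈ Δ, ∀ j, 0 ≤ α j
  Δ_ne_zero : ∀ α ∈ Δ, α ≠ 0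
  simple_mem : ∀ i : Fin l, (Pi.single i 1 : Fin l → ℤ) ∈ Δ
  /-- every nonsimple positive root is a positive root plus a simple root -/
  Δ_decomp : ∀ α ∈ Δ, (∀ i : Fin l, α ≠ Pi.single i 1) →
    ∃ β ∈ Δ, ∃ i : Fin l, α = β + Pi.single i 1
  /-- `α_i + α_j` is a root iff `i ≠ j` and `m_{ij} = -1` (simply-laced types) -/
  sum_simple_mem_iff : ∀ i j : Fin l,
    ((Pi.single i 1 + Pi.single j 1 : Fin l → ℤ) ∈ Δ) ↔ (i ≠ j ∧ M i j = -1)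
  /-- `2α_i + α_j` is never a root (simply-laced types) -/
  two_simple_add_not_mem : ∀ i j : Fin l,
    ((2 : ℤ) • (Pi.single i 1 : Fin l → ℤ) + Pi.single j 1) ∉ Δ
  /-- the underlying type of the affinization `𝔫̄ = 𝔫 ⊗ ℂ[t,t⁻¹]` -/
  nbar : Type
  [instLieRing : LieRing nbar]
  [instLieAlgebra : LieAlgebra ℂ nbar]
  /-- `x α m` is the element `x_α ⊗ t^m` of `𝔫̄` -/
  x : (Fin l → ℤ) → ℤ → nbar
  /-- the elements `x_α ⊗ t^m`, `α ∈ Δ`, `m ∈ ℤ`, form a `ℂ`-basis of `𝔫̄` -/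
  basis : Module.Basis ({α // α ∈ Δ} × ℤ) ℂ nbar
  basis_eq : ∀ (α : {α // α ∈ Δ}) (m : ℤ), basis (α, m) = x α.1 m
  /-- the structure constants: `[x_α, x_β] = C_{α,β} x_{α+β}` -/
  C : (Fin l → ℤ) → (Fin l → ℤ) → ℂ
  C_ne_zero : ∀ α ∈ Δ, ∀ β ∈ Δ, α + β ∈ Δ → C α β ≠ 0
  /-- the bracket `[x ⊗ t^m, y ⊗ t^n] = [x,y] ⊗ t^{m+n}` on `𝔫̄` -/
  bracket_x : ∀ α ∈ Δ, ∀ β ∈ Δ, ∀ m n : ℤ,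
    ⁅x α m, x β n⁆ = if α + β ∈ Δ then C α β • x (α + β) (m + n) else 0

attribute [instance] ADEContext.instLieRing ADEContext.instLieAlgebra

namespace ADEContext

variable (ctx : ADEContext)

/-- the universal enveloping algebra `U(𝔫̄)` -/
abbrev U : Type := UniversalEnvelopingAlgebra ℂ ctx.nbar

/-- the element `x_α(m) = x_α ⊗ t^m`, viewed in `U(𝔫̄)` -/
noncomputable def X (α : Fin ctx.l → ℤ) (m : ℤ) : ctx.U :=
  UniversalEnvelopingAlgebra.ι ℂ (ctx.x α m)

/-- the `i`-th simple root `α_i`, in simple-root coordinates -/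
def sroot (i : Fin ctx.l) : Fin ctx.l → ℤ := Pi.single i 1

/-- the left ideal `U(𝔫̄)𝔫̄₊` of `U(𝔫̄)` generated by `𝔫̄₊ = 𝔫 ⊗ ℂ[t]` (equivalently, by the
elements `x_α(m)`, `α ∈ Δ`, `m ≥ 0`, which span `𝔫̄₊`) -/
noncomputable def Uplus : Submodule ctx.U ctx.U :=
  Submodule.span ctx.U {u | ∃ α ∈ ctx.Δ, ∃ m : ℤ, 0 ≤ m ∧ u = ctx.X α m}

/-- the truncated relation `R^j_{-1,t} = ∑_{m₁,m₂ ≤ -1, m₁+m₂=-t} x_{α_j}(m₁)x_{α_j}(m₂)` -/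
noncomputable def R (j : Fin ctx.l) (t : ℤ) : ctx.U :=
  ∑ m ∈ Finset.Icc (1 - t) (-1 : ℤ), ctx.X (ctx.sroot j) m * ctx.X (ctx.sroot j) (-t - m)

/-- the left ideal `J` of `U(𝔫̄)` generated by the `R^j_{-1,t}`, `j = 1, …, l`, `t ≥ 2` -/
noncomputable def Jideal : Submodule ctx.U ctx.U :=
  Submodule.span ctx.U {u | ∃ j : Fin ctx.l, ∃ t : ℤ, 2 ≤ t ∧ u = ctx.R j t}

/-- the left ideal `I_{λ_0} = J + U(𝔫̄)𝔫̄₊` -/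
noncomputable def I0 : Submodule ctx.U ctx.U := ctx.Jideal ⊔ ctx.Uplus

/-- the left ideal `I_{λ_i} = I_{λ_0} + U(𝔫̄)x_{α_i}(-1)`, `i = 1, …, l` -/
noncomputable def Ii (i : Fin ctx.l) : Submodule ctx.U ctx.U :=
  ctx.I0 ⊔ Submodule.span ctx.U {ctx.X (ctx.sroot i) (-1)}

/-- the value `ν(α) = ∏_j ν_j^{α^j}` on `α ∈ Q` of the character `ν : Q → ℂ^×` determined by
`ν(α_j) = ν_j = νu j` -/
def charVal (νu : Fin ctx.l → ℂˣ) (α : Fin ctx.l → ℤ) : ℂ :=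
  (∏ j, (νu j) ^ (α j) : ℂˣ)

end ADEContext
section LieLocal
attribute [local instance] LieRing.ofAssociativeRing
namespace ADEContext

variable (ctx : ADEContext)

/-- negative-mode indices -/
abbrev Kneg : Type := {q : (Fin ctx.l → ℤ) × ℤ // q.1 ∈ ctx.Δ ∧ q.2 ≤ -1}

/-- the free algebra on negative indices -/
abbrev FA : Type := FreeAlgebra ℂ ctx.Kneg

noncomputable def gen (y : ctx.Kneg) : ctx.FA := FreeAlgebra.ι ℂ y

def xel (y : ctx.Kneg) : ctx.nbar := ctx.x y.1.1 y.1.2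

lemma xel_eq_basis (y : ctx.Kneg) : ctx.xel y = ctx.basis (⟨y.1.1, y.2.1⟩, y.1.2) := by
  rw [ctx.basis_eq]; rfl

noncomputable def word (t : List ctx.Kneg) : ctx.FA := (t.map ctx.gen).prod

@[simp] lemma word_nil : ctx.word [] = 1 := rfl

@[simp] lemma word_cons (y : ctx.Kneg) (t : List ctx.Kneg) :
    ctx.word (y :: t) = ctx.gen y * ctx.word t := by
  simp [word]

noncomputable def brkt (y y' : ctx.Kneg) : ctx.FA :=
  if h : y.1.1 + y'.1.1 ∈ ctx.Δ then
    ctx.C y.1.1 y'.1.1 • ctx.gen ⟨(y.1.1 + y'.1.1, y.1.2 + y'.1.2), ⟨h, by omega⟩⟩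
  else 0

lemma bracket_xel (y y' : ctx.Kneg) :
    ⁅ctx.xel y, ctx.xel y'⁆ =
      if h : y.1.1 + y'.1.1 ∈ ctx.Δ then
        ctx.C y.1.1 y'.1.1 • ctx.x (y.1.1 + y'.1.1) (y.1.2 + y'.1.2) else 0 := by
  rw [xel, xel, ctx.bracket_x _ y.2.1 _ y'.2.1]
  split_ifs with h <;> simp

noncomputable def rele (y y' : ctx.Kneg) : ctx.FA :=
  ctx.gen y * ctx.gen y' - ctx.gen y' * ctx.gen y - ctx.brkt y y'

noncomputable def Nsub : Submodule ℂ ctx.FA :=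
  Submodule.span ℂ {u | ∃ a b : ctx.FA, ∃ y y' : ctx.Kneg, u = a * ctx.rele y y' * b}

abbrev Vq : Type := ctx.FA ⧸ ctx.Nsub

noncomputable def vmk : ctx.FA →ₗ[ℂ] ctx.Vq := ctx.Nsub.mkQ

lemma Nsub_mul_left (z : ctx.FA) : ∀ u ∈ ctx.Nsub, z * u ∈ ctx.Nsub := by
  intro u hu
  induction hu using Submodule.span_induction with
  | mem u hu =>
      obtain ⟨a, b, y, y', rfl⟩ := hu
      exact Submodule.subset_span ⟨z * a, b, y, y', by rw [← mul_assoc, ← mul_assoc]⟩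
  | zero => rw [mul_zero]; exact Submodule.zero_mem _
  | add u v _ _ hu hv => rw [mul_add]; exact Submodule.add_mem _ hu hv
  | smul c u _ hu => rw [mul_smul_comm]; exact Submodule.smul_mem _ _ hu

/-- left multiplication by `z`, descended to the quotient -/
noncomputable def Mop (z : ctx.FA) : ctx.Vq →ₗ[ℂ] ctx.Vq :=
  Submodule.mapQ _ _ (LinearMap.mulLeft ℂ z) (fun u hu => ctx.Nsub_mul_left z u hu)

@[simp] lemma Mop_vmk (z : ctx.FA) (u : ctx.FA) :
    ctx.Mop z (ctx.vmk u) = ctx.vmk (z * u) := rfl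

noncomputable def Lop (y : ctx.Kneg) : ctx.Vq →ₗ[ℂ] ctx.Vq := ctx.Mop (ctx.gen y)

@[simp] lemma Lop_vmk (y : ctx.Kneg) (u : ctx.FA) :
    ctx.Lop y (ctx.vmk u) = ctx.vmk (ctx.gen y * u) := rfl

noncomputable def wv (t : List ctx.Kneg) : ctx.Vq := ctx.vmk (ctx.word t)

lemma vmk_rel_mul (y y' : ctx.Kneg) (b : ctx.FA) :
    ctx.vmk (ctx.gen y * ctx.gen y' * b) =
      ctx.vmk (ctx.gen y' * ctx.gen y * b) + ctx.vmk (ctx.brkt y y' * b) := by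
  have h : ctx.rele y y' * b ∈ ctx.Nsub :=
    Submodule.subset_span ⟨1, b, y, y', by rw [one_mul]⟩
  have h0 : ctx.vmk (ctx.rele y y' * b) = 0 := (Submodule.Quotient.mk_eq_zero _).2 h
  have : ctx.rele y y' * b =
      ctx.gen y * ctx.gen y' * b - ctx.gen y' * ctx.gen y * b - ctx.brkt y y' * b := by
    rw [rele, sub_mul, sub_mul]
  rw [this] at h0
  rw [map_sub, map_sub, sub_eq_zero, sub_eq_iff_eq_add] at h0
  rw [h0, add_comm]

/-- recursive definition of the action of `x_α(m)` on words; meaningful for `0 ≤ m` -/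
noncomputable def fque : List ctx.Kneg → (Fin ctx.l → ℤ) × ℤ → ctx.Vq
  | [], _ => 0
  | (y :: t), q =>
      ctx.Lop y (fque t q) +
        (if h : q.1 + y.1.1 ∈ ctx.Δ then
          ctx.C q.1 y.1.1 •
            (if hn : q.2 + y.1.2 ≤ -1 then ctx.wv (⟨(q.1 + y.1.1, q.2 + y.1.2), ⟨h, hn⟩⟩ :: t)
             else fque t (q.1 + y.1.1, q.2 + y.1.2))
         else 0)

/-- the action of a general element of `𝔫̄` on a word -/
noncomputable def Efun (t : List ctx.Kneg) : ctx.nbar →ₗ[ℂ] ctx.Vq :=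
  ctx.basis.constr ℂ fun p =>
    if hm : p.2 ≤ -1 then ctx.wv (⟨(p.1.1, p.2), ⟨p.1.2, hm⟩⟩ :: t)
    else ctx.fque t (p.1.1, p.2)

lemma Efun_xel (t : List ctx.Kneg) (y : ctx.Kneg) :
    ctx.Efun t (ctx.xel y) = ctx.wv (y :: t) := by
  rw [xel_eq_basis, Efun, Module.Basis.constr_basis, dif_pos y.2.2]

end ADEContext
namespace ADEContext

variable (ctx : ADEContext)

lemma Efun_basis_neg (t : List ctx.Kneg) (p : {α // α ∈ ctx.Δ} × ℤ) (hm : p.2 ≤ -1) :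
    ctx.Efun t (ctx.basis p) = ctx.wv (⟨(p.1.1, p.2), ⟨p.1.2, hm⟩⟩ :: t) := by
  rw [Efun, Module.Basis.constr_basis, dif_pos hm]

lemma Efun_basis_pos (t : List ctx.Kneg) (p : {α // α ∈ ctx.Δ} × ℤ) (hm : ¬ p.2 ≤ -1) :
    ctx.Efun t (ctx.basis p) = ctx.fque t (p.1.1, p.2) := by
  rw [Efun, Module.Basis.constr_basis, dif_neg hm]

lemma Efun_brkt_vmk (t : List ctx.Kneg) (y y' : ctx.Kneg) :
    ctx.Efun t ⁅ctx.xel y, ctx.xel y'⁆ = ctx.vmk (ctx.brkt y y' * ctx.word t) := by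
  rw [ctx.bracket_xel]
  by_cases h : y.1.1 + y'.1.1 ∈ ctx.Δ
  · rw [dif_pos h, map_smul]
    have hb : ctx.x (y.1.1 + y'.1.1) (y.1.2 + y'.1.2)
        = ctx.basis (⟨y.1.1 + y'.1.1, h⟩, y.1.2 + y'.1.2) :=
      (ctx.basis_eq ⟨y.1.1 + y'.1.1, h⟩ (y.1.2 + y'.1.2)).symm
    rw [hb, ctx.Efun_basis_neg t _ (by have := y.2.2; have := y'.2.2; omega)]
    rw [brkt, dif_pos h, smul_mul_assoc, map_smul]
    rfl
  · rw [dif_neg h, map_zero, brkt, dif_neg h, zero_mul, map_zero]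

/-- right bracketing by a fixed element, as a linear map -/
noncomputable def adR (z : ctx.nbar) : ctx.nbar →ₗ[ℂ] ctx.nbar :=
  -(LieAlgebra.ad ℂ ctx.nbar z : ctx.nbar →ₗ[ℂ] ctx.nbar)

@[simp] lemma adR_apply (z ξ : ctx.nbar) : ctx.adR z ξ = ⁅ξ, z⁆ := by
  rw [adR, LinearMap.neg_apply, LieAlgebra.ad_apply]
  exact lie_skew ξ z

lemma Efun_cons (y : ctx.Kneg) (t : List ctx.Kneg) (ξ : ctx.nbar) :
    ctx.Efun (y :: t) ξ = ctx.Lop y (ctx.Efun t ξ) + ctx.Efun t ⁅ξ, ctx.xel y⁆ := by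
  have h : ctx.Efun (y :: t)
      = (ctx.Lop y) ∘ₗ (ctx.Efun t) + (ctx.Efun t) ∘ₗ (ctx.adR (ctx.xel y)) := by
    apply ctx.basis.ext
    intro p
    simp only [LinearMap.add_apply, LinearMap.comp_apply, adR_apply]
    by_cases hm : p.2 ≤ -1
    · rw [ctx.Efun_basis_neg _ p hm, ctx.Efun_basis_neg _ p hm]
      set p' : ctx.Kneg := ⟨(p.1.1, p.2), ⟨p.1.2, hm⟩⟩ with hp'
      have hxp : ctx.basis p = ctx.xel p' := by
        rw [xel_eq_basis]
      rw [hxp, ctx.Efun_brkt_vmk t p' y]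
      show ctx.vmk _ = ctx.Lop y (ctx.vmk _) + _
      rw [Lop_vmk, word_cons, word_cons, word_cons]
      rw [← mul_assoc, ← mul_assoc, ctx.vmk_rel_mul p' y (ctx.word t), mul_assoc]
    · rw [ctx.Efun_basis_pos _ p hm, ctx.Efun_basis_pos _ p hm]
      show ctx.fque (y :: t) (p.1.1, p.2) = _
      rw [fque]
      congr 1
      have hb : ctx.basis p = ctx.x p.1.1 p.2 := by
        rw [← ctx.basis_eq p.1 p.2]
      rw [hb, xel, ctx.bracket_x _ p.1.2 _ y.2.1]
      by_cases h : p.1.1 + y.1.1 ∈ ctx.Δ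
      · rw [dif_pos h, if_pos h, map_smul]
        have hb2 : ctx.x (p.1.1 + y.1.1) (p.2 + y.1.2)
            = ctx.basis (⟨p.1.1 + y.1.1, h⟩, p.2 + y.1.2) :=
          (ctx.basis_eq ⟨p.1.1 + y.1.1, h⟩ (p.2 + y.1.2)).symm
        rw [hb2]
        by_cases hn : p.2 + y.1.2 ≤ -1
        · rw [ctx.Efun_basis_neg _ _ hn, dif_pos hn]
        · rw [ctx.Efun_basis_pos _ _ hn, dif_neg hn]
      · rw [dif_neg h, if_neg h, map_zero]
  simpa using DFunLike.congr_fun h ξ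

/-- the basis of the free algebra indexed by words -/
noncomputable abbrev bFM : Module.Basis (FreeMonoid ctx.Kneg) ℂ ctx.FA :=
  FreeAlgebra.basisFreeMonoid ℂ ctx.Kneg

lemma equiv_word (t : List ctx.Kneg) :
    FreeAlgebra.equivMonoidAlgebraFreeMonoid (R := ℂ) (X := ctx.Kneg) (ctx.word t)
      = MonoidAlgebra.single (FreeMonoid.ofList t) 1 := by
  induction t with
  | nil =>
      rw [word_nil, map_one]
      rfl
  | cons y t ih =>
      rw [word_cons, map_mul, ih]
      have hg : FreeAlgebra.equivMonoidAlgebraFreeMonoid (R := ℂ) (X := ctx.Kneg) (ctx.gen y)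
          = MonoidAlgebra.single (FreeMonoid.of y) 1 := by
        simp [gen, FreeAlgebra.equivMonoidAlgebraFreeMonoid]
      rw [hg, MonoidAlgebra.single_mul_single, one_mul]
      rfl

lemma bFM_apply (w : FreeMonoid ctx.Kneg) : ctx.bFM w = ctx.word w.toList := by
  have h1 : ctx.bFM w
      = (FreeAlgebra.equivMonoidAlgebraFreeMonoid (R := ℂ) (X := ctx.Kneg)).symm
          (MonoidAlgebra.single w 1) := by
    rw [bFM, FreeAlgebra.basisFreeMonoid, Module.Basis.map_apply]
    rfl
  rw [h1]
  rw [AlgEquiv.symm_apply_eq, ctx.equiv_word, FreeMonoid.ofList_toList]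

/-- the action of `ξ ∈ 𝔫̄` on the free algebra, with values in the quotient -/
noncomputable def RtL : ctx.nbar →ₗ[ℂ] (ctx.FA →ₗ[ℂ] ctx.Vq) where
  toFun ξ := ctx.bFM.constr ℂ fun w => ctx.Efun w.toList ξ
  map_add' ξ ζ := by
    apply ctx.bFM.ext
    intro w
    simp [Module.Basis.constr_basis]
  map_smul' c ξ := by
    apply ctx.bFM.ext
    intro w
    simp [Module.Basis.constr_basis]

lemma Rt_word (ξ : ctx.nbar) (t : List ctx.Kneg) :
    ctx.RtL ξ (ctx.word t) = ctx.Efun t ξ := by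
  have : ctx.word t = ctx.bFM (FreeMonoid.ofList t) := by rw [ctx.bFM_apply]; rfl
  rw [this]
  show (ctx.bFM.constr ℂ fun w => ctx.Efun w.toList ξ) _ = _
  rw [Module.Basis.constr_basis]
  rfl

lemma Rt_gen_mul (ξ : ctx.nbar) (y : ctx.Kneg) (Θ : ctx.FA) :
    ctx.RtL ξ (ctx.gen y * Θ) = ctx.Lop y (ctx.RtL ξ Θ) + ctx.RtL ⁅ξ, ctx.xel y⁆ Θ := by
  have h : (ctx.RtL ξ) ∘ₗ (LinearMap.mulLeft ℂ (ctx.gen y))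
      = (ctx.Lop y) ∘ₗ (ctx.RtL ξ) + ctx.RtL ⁅ξ, ctx.xel y⁆ := by
    apply ctx.bFM.ext
    intro w
    simp only [LinearMap.add_apply, LinearMap.comp_apply, LinearMap.mulLeft_apply]
    rw [ctx.bFM_apply, ← word_cons, Rt_word, Rt_word, Rt_word, ctx.Efun_cons]
  simpa using DFunLike.congr_fun h Θ

end ADEContext
namespace ADEContext

variable (ctx : ADEContext)

lemma Mop_smul (c : ℂ) (z : ctx.FA) (v : ctx.Vq) :
    ctx.Mop (c • z) v = c • ctx.Mop z v := by
  obtain ⟨u, rfl⟩ := ctx.Nsub.mkQ_surjective v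
  show ctx.vmk ((c • z) * u) = c • ctx.vmk (z * u)
  rw [smul_mul_assoc, map_smul]

lemma Mop_zero : ctx.Mop (0 : ctx.FA) = 0 := by
  apply Submodule.linearMap_qext
  apply LinearMap.ext
  intro u
  show ctx.vmk (0 * u) = 0
  rw [zero_mul, map_zero]

lemma Lop_comm (y y' : ctx.Kneg) (v : ctx.Vq) :
    ctx.Lop y (ctx.Lop y' v) = ctx.Lop y' (ctx.Lop y v) + ctx.Mop (ctx.brkt y y') v := by
  obtain ⟨u, rfl⟩ := ctx.Nsub.mkQ_surjective v
  show ctx.vmk (ctx.gen y * (ctx.gen y' * u))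
      = ctx.vmk (ctx.gen y' * (ctx.gen y * u)) + ctx.vmk (ctx.brkt y y' * u)
  rw [← mul_assoc, ← mul_assoc, ctx.vmk_rel_mul y y' u]

lemma Rt_brkt_mul (ξ : ctx.nbar) (y y' : ctx.Kneg) (Θ : ctx.FA) :
    ctx.RtL ξ (ctx.brkt y y' * Θ)
      = ctx.Mop (ctx.brkt y y') (ctx.RtL ξ Θ) + ctx.RtL ⁅ξ, ⁅ctx.xel y, ctx.xel y'⁆⁆ Θ := by
  rw [ctx.bracket_xel]
  by_cases h : y.1.1 + y'.1.1 ∈ ctx.Δ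
  · rw [dif_pos h, brkt, dif_pos h]
    set y'' : ctx.Kneg := ⟨(y.1.1 + y'.1.1, y.1.2 + y'.1.2), ⟨h, by omega⟩⟩ with hy''
    have hx : ctx.x (y.1.1 + y'.1.1) (y.1.2 + y'.1.2) = ctx.xel y'' := rfl
    rw [hx, smul_mul_assoc, map_smul, lie_smul, map_smul, ctx.Rt_gen_mul ξ y'' Θ,
      ctx.Mop_smul, smul_add, Lop]
    rw [LinearMap.smul_apply]
  · rw [dif_neg h, brkt, dif_neg h, zero_mul, map_zero, lie_zero, map_zero]
    rw [LinearMap.zero_apply, add_zero, ctx.Mop_zero]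
    rfl

lemma Rt_rele_mul (ξ : ctx.nbar) (y y' : ctx.Kneg) (Θ : ctx.FA) :
    ctx.RtL ξ (ctx.rele y y' * Θ) = 0 := by
  have hexp : ctx.rele y y' * Θ
      = ctx.gen y * (ctx.gen y' * Θ) - ctx.gen y' * (ctx.gen y * Θ) - ctx.brkt y y' * Θ := by
    rw [rele, sub_mul, sub_mul, mul_assoc, mul_assoc]
  have h1 := lie_lie ξ (ctx.xel y) (ctx.xel y')
  have h2 : ⁅⁅ξ, ctx.xel y'⁆, ctx.xel y⁆ = -⁅ctx.xel y, ⁅ξ, ctx.xel y'⁆⁆ :=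
    (lie_skew _ _).symm
  rw [hexp, map_sub, map_sub, ctx.Rt_brkt_mul]
  simp only [ctx.Rt_gen_mul, map_add]
  rw [ctx.Lop_comm y y' (ctx.RtL ξ Θ), h1, h2]
  simp only [map_sub, map_neg, LinearMap.sub_apply, LinearMap.neg_apply]
  abel

lemma Rt_word_rele (a : List ctx.Kneg) :
    ∀ (ξ : ctx.nbar) (y y' : ctx.Kneg) (Θ : ctx.FA),
      ctx.RtL ξ (ctx.word a * (ctx.rele y y' * Θ)) = 0 := by
  induction a with
  | nil => intro ξ y y' Θ; rw [word_nil, one_mul]; exact ctx.Rt_rele_mul ξ y y' Θ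
  | cons z a ih =>
      intro ξ y y' Θ
      rw [word_cons, mul_assoc, ctx.Rt_gen_mul, ih, ih, map_zero, add_zero]

lemma Rt_Nsub (ξ : ctx.nbar) : ∀ u ∈ ctx.Nsub, ctx.RtL ξ u = 0 := by
  intro u hu
  induction hu using Submodule.span_induction with
  | mem u hu =>
      obtain ⟨a, b, y, y', rfl⟩ := hu
      have h : (ctx.RtL ξ) ∘ₗ (LinearMap.mulRight ℂ (ctx.rele y y' * b)) = 0 := by
        apply ctx.bFM.ext
        intro w
        simp only [LinearMap.comp_apply, LinearMap.mulRight_apply, LinearMap.zero_apply]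
        rw [ctx.bFM_apply]
        exact ctx.Rt_word_rele w.toList ξ y y' b
      have := DFunLike.congr_fun h a
      simpa [mul_assoc] using this
  | zero => rw [map_zero]
  | add u v _ _ hu hv => rw [map_add, hu, hv, add_zero]
  | smul c u _ hu => rw [map_smul, hu, smul_zero]

/-- the action of `𝔫̄` on the quotient `Vq` -/
noncomputable def rhoE : ctx.nbar →ₗ[ℂ] Module.End ℂ ctx.Vq where
  toFun ξ := ctx.Nsub.liftQ (ctx.RtL ξ) (fun u hu => ctx.Rt_Nsub ξ u hu)
  map_add' ξ ζ := by
    apply Submodule.linearMap_qext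
    apply LinearMap.ext
    intro u
    simp [map_add]
    rfl
  map_smul' c ξ := by
    apply Submodule.linearMap_qext
    apply LinearMap.ext
    intro u
    simp [map_smul]
    rfl

@[simp] lemma rhoE_vmk (ξ : ctx.nbar) (u : ctx.FA) :
    ctx.rhoE ξ (ctx.vmk u) = ctx.RtL ξ u := rfl

lemma rho_Lop (ξ : ctx.nbar) (y : ctx.Kneg) (v : ctx.Vq) :
    ctx.rhoE ξ (ctx.Lop y v) = ctx.Lop y (ctx.rhoE ξ v) + ctx.rhoE ⁅ξ, ctx.xel y⁆ v := by
  obtain ⟨u, rfl⟩ := ctx.Nsub.mkQ_surjective v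
  show ctx.rhoE ξ (ctx.vmk (ctx.gen y * u)) = _
  rw [rhoE_vmk, ctx.Rt_gen_mul]
  rfl

end ADEContext
namespace ADEContext

variable (ctx : ADEContext)

lemma fque_nil (q : (Fin ctx.l → ℤ) × ℤ) : ctx.fque [] q = 0 := rfl

lemma wv_nil : ctx.wv [] = ctx.vmk 1 := rfl

lemma rho_wv_nil (ξ : ctx.nbar) : ctx.rhoE ξ (ctx.wv []) = ctx.Efun [] ξ :=
  ctx.Rt_word ξ []

lemma rho_wv_single (ξ : ctx.nbar) (y : ctx.Kneg) :
    ctx.rhoE ξ (ctx.wv [y]) = ctx.Lop y (ctx.Efun [] ξ) + ctx.Efun [] ⁅ξ, ctx.xel y⁆ := by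
  rw [wv, rhoE_vmk, ctx.Rt_word, ctx.Efun_cons]

lemma rho_base_pair (p q : {α // α ∈ ctx.Δ} × ℤ) :
    ctx.rhoE (ctx.basis p) (ctx.Efun [] (ctx.basis q))
      - ctx.rhoE (ctx.basis q) (ctx.Efun [] (ctx.basis p))
      = ctx.Efun [] ⁅ctx.basis p, ctx.basis q⁆ := by
  by_cases hp : p.2 ≤ -1 <;> by_cases hq : q.2 ≤ -1
  · -- both negative
    have hbp : ctx.basis p = ctx.xel ⟨(p.1.1, p.2), ⟨p.1.2, hp⟩⟩ := by rw [xel_eq_basis]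
    have hbq : ctx.basis q = ctx.xel ⟨(q.1.1, q.2), ⟨q.1.2, hq⟩⟩ := by rw [xel_eq_basis]
    set p' : ctx.Kneg := ⟨(p.1.1, p.2), ⟨p.1.2, hp⟩⟩
    set q' : ctx.Kneg := ⟨(q.1.1, q.2), ⟨q.1.2, hq⟩⟩
    rw [ctx.Efun_basis_neg [] q hq, ctx.Efun_basis_neg [] p hp, ctx.rho_wv_single,
      ctx.rho_wv_single, ctx.Efun_basis_neg [] q hq, ctx.Efun_basis_neg [] p hp, hbp, hbq,
      ctx.Efun_brkt_vmk, ctx.Efun_brkt_vmk]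
    have hLq : ctx.Lop q' (ctx.wv [p']) = ctx.vmk (ctx.gen q' * ctx.gen p' * ctx.word []) := by
      rw [wv, Lop_vmk, word_cons, mul_assoc]
    have hLp : ctx.Lop p' (ctx.wv [q']) = ctx.vmk (ctx.gen p' * ctx.gen q' * ctx.word []) := by
      rw [wv, Lop_vmk, word_cons, mul_assoc]
    rw [hLq, hLp, ctx.vmk_rel_mul p' q' (ctx.word [])]
    have hskew : ctx.vmk (ctx.brkt q' p' * ctx.word [])
        = - ctx.vmk (ctx.brkt p' q' * ctx.word []) := by
      rw [← ctx.Efun_brkt_vmk [] q' p', ← ctx.Efun_brkt_vmk [] p' q', ← map_neg, ← lie_skew]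
    rw [hskew]
    abel
  · -- p negative, q positive
    have hbp : ctx.basis p = ctx.xel ⟨(p.1.1, p.2), ⟨p.1.2, hp⟩⟩ := by rw [xel_eq_basis]
    rw [ctx.Efun_basis_pos [] q hq, fque_nil, map_zero, ctx.Efun_basis_neg [] p hp,
      ctx.rho_wv_single, ctx.Efun_basis_pos [] q hq, fque_nil, map_zero, zero_add]
    rw [hbp, ← lie_skew, map_neg]
    abel
  · -- p positive, q negative
    have hbq : ctx.basis q = ctx.xel ⟨(q.1.1, q.2), ⟨q.1.2, hq⟩⟩ := by rw [xel_eq_basis]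
    rw [ctx.Efun_basis_pos [] p hp, fque_nil, map_zero, ctx.Efun_basis_neg [] q hq,
      ctx.rho_wv_single, ctx.Efun_basis_pos [] p hp, fque_nil, map_zero, zero_add]
    rw [hbq]
    abel
  · -- both positive
    rw [ctx.Efun_basis_pos [] q hq, fque_nil, map_zero, ctx.Efun_basis_pos [] p hp, fque_nil,
      map_zero, sub_zero]
    symm
    have hb1 : ctx.basis p = ctx.x p.1.1 p.2 := by rw [← ctx.basis_eq p.1 p.2]
    have hb2 : ctx.basis q = ctx.x q.1.1 q.2 := by rw [← ctx.basis_eq q.1 q.2]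
    rw [hb1, hb2, ctx.bracket_x _ p.1.2 _ q.1.2]
    by_cases h : p.1.1 + q.1.1 ∈ ctx.Δ
    · rw [if_pos h, map_smul]
      have hb3 : ctx.x (p.1.1 + q.1.1) (p.2 + q.2)
          = ctx.basis (⟨p.1.1 + q.1.1, h⟩, p.2 + q.2) :=
        (ctx.basis_eq ⟨p.1.1 + q.1.1, h⟩ (p.2 + q.2)).symm
      rw [hb3, ctx.Efun_basis_pos [] _ (by omega), fque_nil, smul_zero]
    · rw [if_neg h, map_zero]

lemma rho_base (ξ ζ : ctx.nbar) :
    ctx.rhoE ξ (ctx.Efun [] ζ) - ctx.rhoE ζ (ctx.Efun [] ξ) = ctx.Efun [] ⁅ξ, ζ⁆ := by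
  have hF : ∀ (F G : ctx.nbar →ₗ[ℂ] ctx.nbar →ₗ[ℂ] ctx.Vq),
      (∀ p q, F (ctx.basis p) (ctx.basis q) = G (ctx.basis p) (ctx.basis q)) → F = G := by
    intro F G h
    apply ctx.basis.ext
    intro p
    apply ctx.basis.ext
    intro q
    exact h p q
  let F : ctx.nbar →ₗ[ℂ] ctx.nbar →ₗ[ℂ] ctx.Vq :=
    LinearMap.mk₂ ℂ (fun ξ ζ => ctx.rhoE ξ (ctx.Efun [] ζ) - ctx.rhoE ζ (ctx.Efun [] ξ))
      (fun a b c => by simp only [map_add, LinearMap.add_apply]; abel)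
      (fun c a b => by simp only [map_smul, LinearMap.smul_apply, smul_sub])
      (fun a b c => by simp only [map_add, LinearMap.add_apply]; abel)
      (fun c a b => by simp only [map_smul, LinearMap.smul_apply, smul_sub])
  let G : ctx.nbar →ₗ[ℂ] ctx.nbar →ₗ[ℂ] ctx.Vq :=
    LinearMap.mk₂ ℂ (fun ξ ζ => ctx.Efun [] ⁅ξ, ζ⁆)
      (fun a b c => by simp only [add_lie, map_add])
      (fun c a b => by simp only [smul_lie, map_smul])
      (fun a b c => by simp only [lie_add, map_add])
      (fun c a b => by simp only [lie_smul, map_smul])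
  have h : F = G := hF F G (fun p q => ctx.rho_base_pair p q)
  exact DFunLike.congr_fun (DFunLike.congr_fun h ξ) ζ

lemma keylie : ∀ (t : List ctx.Kneg) (ξ ζ : ctx.nbar),
    ctx.rhoE ξ (ctx.rhoE ζ (ctx.wv t)) - ctx.rhoE ζ (ctx.rhoE ξ (ctx.wv t))
      = ctx.rhoE ⁅ξ, ζ⁆ (ctx.wv t) := by
  intro t
  induction t with
  | nil =>
      intro ξ ζ
      rw [ctx.rho_wv_nil, ctx.rho_wv_nil, ctx.rho_wv_nil]
      exact ctx.rho_base ξ ζ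
  | cons y t ih =>
      intro ξ ζ
      have hw : ctx.wv (y :: t) = ctx.Lop y (ctx.wv t) := by
        rw [wv, wv, word_cons]; rfl
      have hjac : ⁅⁅ξ, ζ⁆, ctx.xel y⁆ = ⁅⁅ξ, ctx.xel y⁆, ζ⁆ + ⁅ξ, ⁅ζ, ctx.xel y⁆⁆ := by
        rw [lie_lie]
        have : ⁅⁅ξ, ctx.xel y⁆, ζ⁆ = -⁅ζ, ⁅ξ, ctx.xel y⁆⁆ := (lie_skew _ _).symm
        rw [this]
        abel
      have e1 := eq_add_of_sub_eq (ih ξ ζ)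
      have e2 := eq_add_of_sub_eq (ih ⁅ξ, ctx.xel y⁆ ζ)
      have e3 := eq_add_of_sub_eq (ih ξ ⁅ζ, ctx.xel y⁆)
      rw [hw]
      simp only [ctx.rho_Lop, map_add, LinearMap.add_apply]
      rw [hjac, map_add, LinearMap.add_apply, e1, e2, e3]
      simp only [map_add]
      abel

/-- the Lie algebra morphism `𝔫̄ → End(Vq)` -/
noncomputable def rhoHom : ctx.nbar →ₗ⁅ℂ⁆ Module.End ℂ ctx.Vq :=
  { ctx.rhoE with
    map_lie' := by
      intro ξ ζ
      show ctx.rhoE ⁅ξ, ζ⁆ = ⁅ctx.rhoE ξ, ctx.rhoE ζ⁆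
      rw [Ring.lie_def]
      apply Submodule.linearMap_qext
      apply ctx.bFM.ext
      intro w
      simp only [LinearMap.comp_apply, LinearMap.sub_apply, Module.End.mul_apply]
      have hv : ctx.Nsub.mkQ (ctx.bFM w) = ctx.wv w.toList := by
        rw [ctx.bFM_apply]; rfl
      rw [hv, ← ctx.keylie w.toList ξ ζ] }

end ADEContext
namespace ADEContext

variable (ctx : ADEContext)

/-- the set of negative-mode generators of `U(𝔫̄₋)` -/
def negGen : Set ctx.U := {u : ctx.U | ∃ α ∈ ctx.Δ, ∃ m : ℤ, m ≤ -1 ∧ u = ctx.X α m}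

/-- the representation of `U(𝔫̄)` on `Vq` -/
noncomputable def Urep : ctx.U →ₐ[ℂ] Module.End ℂ ctx.Vq :=
  UniversalEnvelopingAlgebra.lift ℂ ctx.rhoHom

lemma Urep_X (α : Fin ctx.l → ℤ) (m : ℤ) :
    ctx.Urep (ctx.X α m) = ctx.rhoE (ctx.x α m) := by
  rw [Urep, X, UniversalEnvelopingAlgebra.lift_ι_apply]
  rfl

noncomputable def XU (y : ctx.Kneg) : ctx.U := ctx.X y.1.1 y.1.2

noncomputable def sFA : ctx.FA →ₐ[ℂ] ctx.U := FreeAlgebra.lift ℂ ctx.XU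

@[simp] lemma sFA_gen (y : ctx.Kneg) : ctx.sFA (ctx.gen y) = ctx.XU y := by
  rw [sFA, gen, FreeAlgebra.lift_ι_apply]

lemma iota_comm (z w : ctx.nbar) :
    UniversalEnvelopingAlgebra.ι ℂ z * UniversalEnvelopingAlgebra.ι ℂ w
      - UniversalEnvelopingAlgebra.ι ℂ w * UniversalEnvelopingAlgebra.ι ℂ z
      = UniversalEnvelopingAlgebra.ι ℂ ⁅z, w⁆ := by
  rw [LieHom.map_lie, Ring.lie_def]

lemma sFA_rele (y y' : ctx.Kneg) : ctx.sFA (ctx.rele y y') = 0 := by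
  rw [rele, map_sub, map_sub, map_mul, map_mul, sFA_gen, sFA_gen]
  have h1 : ctx.XU y * ctx.XU y' - ctx.XU y' * ctx.XU y
      = UniversalEnvelopingAlgebra.ι ℂ ⁅ctx.xel y, ctx.xel y'⁆ := ctx.iota_comm _ _
  have h2 : ctx.sFA (ctx.brkt y y')
      = UniversalEnvelopingAlgebra.ι ℂ ⁅ctx.xel y, ctx.xel y'⁆ := by
    rw [ctx.bracket_xel, brkt]
    by_cases h : y.1.1 + y'.1.1 ∈ ctx.Δ
    · rw [dif_pos h, dif_pos h, map_smul, map_smul, sFA_gen]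
      rfl
    · rw [dif_neg h, dif_neg h, map_zero, map_zero]
  rw [h2, ← h1, sub_self]

lemma sFA_Nsub : ∀ u ∈ ctx.Nsub, ctx.sFA u = 0 := by
  intro u hu
  induction hu using Submodule.span_induction with
  | mem u hu =>
      obtain ⟨a, b, y, y', rfl⟩ := hu
      rw [map_mul, map_mul, ctx.sFA_rele, mul_zero, zero_mul]
  | zero => rw [map_zero]
  | add u v _ _ hu hv => rw [map_add, hu, hv, add_zero]
  | smul c u _ hu => rw [map_smul, hu, smul_zero]

noncomputable def sV : ctx.Vq →ₗ[ℂ] ctx.U :=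
  ctx.Nsub.liftQ ctx.sFA.toLinearMap (fun u hu => ctx.sFA_Nsub u hu)

@[simp] lemma sV_vmk (u : ctx.FA) : ctx.sV (ctx.vmk u) = ctx.sFA u := rfl

lemma sV_wv_nil : ctx.sV (ctx.wv []) = 1 := by
  rw [wv, sV_vmk]
  show ctx.sFA 1 = 1
  rw [map_one]

lemma sV_wv_cons (y : ctx.Kneg) (t : List ctx.Kneg) :
    ctx.sV (ctx.wv (y :: t)) = ctx.XU y * ctx.sV (ctx.wv t) := by
  rw [wv, wv, word_cons, sV_vmk, sV_vmk, map_mul, sFA_gen]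

lemma rho_neg_mul (y : ctx.Kneg) (v : ctx.Vq) :
    ctx.sV (ctx.rhoE (ctx.xel y) v) = ctx.XU y * ctx.sV v := by
  have h : (ctx.sV ∘ₗ (ctx.rhoE (ctx.xel y))) ∘ₗ ctx.Nsub.mkQ
      = ((LinearMap.mulLeft ℂ (ctx.XU y)) ∘ₗ ctx.sV) ∘ₗ ctx.Nsub.mkQ := by
    apply ctx.bFM.ext
    intro w
    simp only [LinearMap.comp_apply, LinearMap.mulLeft_apply]
    have hv : ctx.Nsub.mkQ (ctx.bFM w) = ctx.wv w.toList := by rw [ctx.bFM_apply]; rfl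
    rw [hv]
    have : ctx.rhoE (ctx.xel y) (ctx.wv w.toList) = ctx.wv (y :: w.toList) := by
      rw [wv, rhoE_vmk, ctx.Rt_word, ctx.Efun_xel]
    rw [this, ctx.sV_wv_cons]
  obtain ⟨u, rfl⟩ := ctx.Nsub.mkQ_surjective v
  exact DFunLike.congr_fun h u

lemma Urep_adjoin_mul : ∀ a ∈ Algebra.adjoin ℂ ctx.negGen, ∀ v : ctx.Vq,
    ctx.sV (ctx.Urep a v) = a * ctx.sV v := by
  intro a ha
  induction ha using Algebra.adjoin_induction with
  | mem u hu =>
      intro v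
      obtain ⟨α, hα, m, hm, rfl⟩ := hu
      rw [ctx.Urep_X]
      have hx : ctx.x α m = ctx.xel ⟨(α, m), ⟨hα, hm⟩⟩ := rfl
      rw [hx, ctx.rho_neg_mul]
      rfl
  | algebraMap r =>
      intro v
      rw [AlgHom.commutes, Module.algebraMap_end_apply, map_smul, Algebra.smul_def]
  | add a b _ _ ha hb =>
      intro v
      rw [map_add, LinearMap.add_apply, map_add, ha, hb, add_mul]
  | mul a b _ _ ha hb =>
      intro v
      rw [map_mul, Module.End.mul_apply, ha, hb, mul_assoc]

lemma pos_kill (α : Fin ctx.l → ℤ) (hα : α ∈ ctx.Δ) (m : ℤ) (hm : 0 ≤ m) :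
    ctx.rhoE (ctx.x α m) (ctx.wv []) = 0 := by
  rw [ctx.rho_wv_nil]
  have hb : ctx.x α m = ctx.basis (⟨α, hα⟩, m) := (ctx.basis_eq ⟨α, hα⟩ m).symm
  rw [hb, ctx.Efun_basis_pos [] _ (by omega), fque_nil]

lemma Uplus_kill : ∀ u ∈ ctx.Uplus, ctx.Urep u (ctx.wv []) = 0 := by
  intro u hu
  induction hu using Submodule.span_induction with
  | mem u hu =>
      obtain ⟨α, hα, m, hm, rfl⟩ := hu
      rw [ctx.Urep_X]
      exact ctx.pos_kill α hα m hm
  | zero => rw [map_zero, LinearMap.zero_apply]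
  | add u v _ _ hu hv => rw [map_add, LinearMap.add_apply, hu, hv, add_zero]
  | smul r u _ hu => rw [smul_eq_mul, map_mul, Module.End.mul_apply, hu, map_zero]

lemma adjoin_inter_Uplus : ∀ a ∈ Algebra.adjoin ℂ ctx.negGen, a ∈ ctx.Uplus → a = 0 := by
  intro a ha haU
  have h1 : ctx.sV (ctx.Urep a (ctx.wv [])) = a * ctx.sV (ctx.wv []) :=
    ctx.Urep_adjoin_mul a ha (ctx.wv [])
  rw [ctx.Uplus_kill a haU, map_zero, ctx.sV_wv_nil, mul_one] at h1
  exact h1.symm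

end ADEContext
namespace ADEContext

variable (ctx : ADEContext)

abbrev Kpos : Type := {q : (Fin ctx.l → ℤ) × ℤ // q.1 ∈ ctx.Δ ∧ 0 ≤ q.2}

noncomputable def negP (a : List ctx.Kneg) : ctx.U :=
  (a.map fun y => ctx.X y.1.1 y.1.2).prod

noncomputable def posP (b : List ctx.Kpos) : ctx.U :=
  (b.map fun y => ctx.X y.1.1 y.1.2).prod

@[simp] lemma negP_nil : ctx.negP [] = 1 := rfl
@[simp] lemma posP_nil : ctx.posP [] = 1 := rfl

lemma negP_cons (y : ctx.Kneg) (a : List ctx.Kneg) :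
    ctx.negP (y :: a) = ctx.X y.1.1 y.1.2 * ctx.negP a := by simp [negP]

lemma posP_cons (y : ctx.Kpos) (b : List ctx.Kpos) :
    ctx.posP (y :: b) = ctx.X y.1.1 y.1.2 * ctx.posP b := by simp [posP]

lemma posP_concat (b : List ctx.Kpos) (y : ctx.Kpos) :
    ctx.posP (b ++ [y]) = ctx.posP b * ctx.X y.1.1 y.1.2 := by simp [posP]

/-- the span of normally ordered monomials -/
noncomputable def Tspan : Submodule ℂ ctx.U :=
  Submodule.span ℂ {u | ∃ a : List ctx.Kneg, ∃ b : List ctx.Kpos, u = ctx.negP a * ctx.posP b}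

lemma negP_mul_posP_mem (a : List ctx.Kneg) (b : List ctx.Kpos) :
    ctx.negP a * ctx.posP b ∈ ctx.Tspan :=
  Submodule.subset_span ⟨a, b, rfl⟩

lemma one_mem_Tspan : (1 : ctx.U) ∈ ctx.Tspan := by
  have := ctx.negP_mul_posP_mem [] []
  simpa using this

lemma neg_mul_Tspan (y : ctx.Kneg) : ∀ t ∈ ctx.Tspan, ctx.X y.1.1 y.1.2 * t ∈ ctx.Tspan := by
  intro t ht
  induction ht using Submodule.span_induction with
  | mem u hu =>
      obtain ⟨a, b, rfl⟩ := hu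
      rw [← mul_assoc, ← ctx.negP_cons y a]
      exact ctx.negP_mul_posP_mem _ _
  | zero => rw [mul_zero]; exact Submodule.zero_mem _
  | add u v _ _ hu hv => rw [mul_add]; exact Submodule.add_mem _ hu hv
  | smul c u _ hu => rw [mul_smul_comm]; exact Submodule.smul_mem _ _ hu

lemma key_straighten : ∀ (a : List ctx.Kneg) (α : Fin ctx.l → ℤ), α ∈ ctx.Δ → ∀ (k : ℤ)
    (b : List ctx.Kpos), ctx.X α k * (ctx.negP a * ctx.posP b) ∈ ctx.Tspan := by
  intro a
  induction a with
  | nil =>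
      intro α hα k b
      rw [negP_nil, one_mul]
      by_cases hk : k ≤ -1
      · have : ctx.X α k * ctx.posP b = ctx.negP [⟨(α, k), ⟨hα, hk⟩⟩] * ctx.posP b := by
          rw [negP_cons, negP_nil, mul_one]
        rw [this]
        exact ctx.negP_mul_posP_mem _ _
      · have : ctx.X α k * ctx.posP b
            = ctx.negP [] * ctx.posP (⟨(α, k), ⟨hα, by omega⟩⟩ :: b) := by
          rw [negP_nil, one_mul, posP_cons]
        rw [this]
        exact ctx.negP_mul_posP_mem _ _
  | cons y a ih =>
      intro α hα k b
      by_cases hk : k ≤ -1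
      · rw [← mul_assoc, ← ctx.negP_cons ⟨(α, k), ⟨hα, hk⟩⟩ (y :: a)]
        exact ctx.negP_mul_posP_mem _ _
      · -- commute past the first factor
        rw [ctx.negP_cons y a, ← mul_assoc, ← mul_assoc]
        have hcomm : ctx.X α k * ctx.X y.1.1 y.1.2
            = ctx.X y.1.1 y.1.2 * ctx.X α k
              + UniversalEnvelopingAlgebra.ι ℂ ⁅ctx.x α k, ctx.x y.1.1 y.1.2⁆ := by
          rw [← ctx.iota_comm (ctx.x α k) (ctx.x y.1.1 y.1.2)]
          show _ = _ + (ctx.X α k * ctx.X y.1.1 y.1.2 - ctx.X y.1.1 y.1.2 * ctx.X α k)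
          abel
        rw [hcomm, add_mul, add_mul]
        apply Submodule.add_mem
        · rw [mul_assoc, mul_assoc]
          exact ctx.neg_mul_Tspan y _ (ih α hα k b)
        · rw [ctx.bracket_x _ hα _ y.2.1]
          by_cases h : α + y.1.1 ∈ ctx.Δ
          · rw [if_pos h, map_smul, smul_mul_assoc, smul_mul_assoc]
            apply Submodule.smul_mem
            have : (UniversalEnvelopingAlgebra.ι ℂ (ctx.x (α + y.1.1) (k + y.1.2)) : ctx.U)
                = ctx.X (α + y.1.1) (k + y.1.2) := rfl
            rw [this, mul_assoc]
            exact ih (α + y.1.1) h (k + y.1.2) b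
          · rw [if_neg h, map_zero, zero_mul, zero_mul]
            exact Submodule.zero_mem _

end ADEContext
namespace ADEContext

variable (ctx : ADEContext)

lemma X_mul_Tspan (α : Fin ctx.l → ℤ) (hα : α ∈ ctx.Δ) (k : ℤ) :
    ∀ t ∈ ctx.Tspan, ctx.X α k * t ∈ ctx.Tspan := by
  intro t ht
  induction ht using Submodule.span_induction with
  | mem u hu =>
      obtain ⟨a, b, rfl⟩ := hu
      exact ctx.key_straighten a α hα k b
  | zero => rw [mul_zero]; exact Submodule.zero_mem _
  | add u v _ _ hu hv => rw [mul_add]; exact Submodule.add_mem _ hu hv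
  | smul c u _ hu => rw [mul_smul_comm]; exact Submodule.smul_mem _ _ hu

lemma iota_mul_Tspan (z : ctx.nbar) :
    ∀ t ∈ ctx.Tspan, (UniversalEnvelopingAlgebra.ι ℂ z : ctx.U) * t ∈ ctx.Tspan := by
  intro t ht
  have h0 : (UniversalEnvelopingAlgebra.ι ℂ z : ctx.U)
      = (UniversalEnvelopingAlgebra.ι ℂ : ctx.nbar →ₗ⁅ℂ⁆ ctx.U).toLinearMap z := rfl
  rw [h0, ← ctx.basis.linearCombination_repr z, Finsupp.linearCombination_apply, Finsupp.sum,
    map_sum, Finset.sum_mul]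
  apply Submodule.sum_mem
  intro p _
  rw [map_smul, smul_mul_assoc]
  apply Submodule.smul_mem
  have h1 : (UniversalEnvelopingAlgebra.ι ℂ : ctx.nbar →ₗ⁅ℂ⁆ ctx.U).toLinearMap (ctx.basis p)
      = ctx.X p.1.1 p.2 := by
    rw [X, ← ctx.basis_eq p.1 p.2]
    rfl
  rw [h1]
  exact ctx.X_mul_Tspan p.1.1 p.1.2 p.2 t ht

lemma mul_Tspan : ∀ u : ctx.U, ∀ t ∈ ctx.Tspan, u * t ∈ ctx.Tspan := by
  intro u
  obtain ⟨tu, rfl⟩ : ∃ tu, UniversalEnvelopingAlgebra.mkAlgHom ℂ ctx.nbar tu = u :=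
    RingCon.mkₐ_surjective (α := ℂ) _ u
  induction tu using TensorAlgebra.induction with
  | algebraMap r =>
      intro t ht
      rw [AlgHom.commutes]
      show (algebraMap ℂ ctx.U) r * t ∈ ctx.Tspan
      rw [← Algebra.smul_def]
      exact Submodule.smul_mem _ _ ht
  | ι z =>
      intro t ht
      have : UniversalEnvelopingAlgebra.mkAlgHom ℂ ctx.nbar
            ((TensorAlgebra.ι ℂ) z)
          = (UniversalEnvelopingAlgebra.ι ℂ z : ctx.U) := by
        rw [UniversalEnvelopingAlgebra.ι_apply]
      rw [this]
      exact ctx.iota_mul_Tspan z t ht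
  | mul a b ha hb =>
      intro t ht
      rw [map_mul, mul_assoc]
      exact ha _ (hb t ht)
  | add a b ha hb =>
      intro t ht
      rw [map_add, add_mul]
      exact Submodule.add_mem _ (ha t ht) (hb t ht)

lemma Tspan_eq_top : ∀ u : ctx.U, u ∈ ctx.Tspan := by
  intro u
  have := ctx.mul_Tspan u 1 ctx.one_mem_Tspan
  rwa [mul_one] at this

lemma negP_mem_adjoin (a : List ctx.Kneg) : ctx.negP a ∈ Algebra.adjoin ℂ ctx.negGen := by
  induction a with
  | nil => rw [negP_nil]; exact one_mem _
  | cons y a ih =>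
      rw [negP_cons]
      exact mul_mem (Algebra.subset_adjoin ⟨y.1.1, y.2.1, y.1.2, y.2.2, rfl⟩) ih

lemma X_mem_Uplus (α : Fin ctx.l → ℤ) (hα : α ∈ ctx.Δ) (m : ℤ) (hm : 0 ≤ m) :
    ctx.X α m ∈ ctx.Uplus :=
  Submodule.subset_span ⟨α, hα, m, hm, rfl⟩

lemma decomp (u : ctx.U) :
    ∃ a ∈ Algebra.adjoin ℂ ctx.negGen, u - a ∈ ctx.Uplus := by
  have hu := ctx.Tspan_eq_top u
  have hle : ctx.Tspan ≤ (Algebra.adjoin ℂ ctx.negGen).toSubmodule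
      ⊔ (ctx.Uplus.restrictScalars ℂ) := by
    rw [Tspan, Submodule.span_le]
    rintro u ⟨a, b, rfl⟩
    rcases List.eq_nil_or_concat b with hb | ⟨b', y, rfl⟩
    · subst hb
      rw [posP_nil, mul_one]
      exact Submodule.mem_sup_left (ctx.negP_mem_adjoin a)
    · apply Submodule.mem_sup_right
      rw [List.concat_eq_append, ctx.posP_concat, ← mul_assoc]
      show ctx.negP a * ctx.posP b' * ctx.X y.1.1 y.1.2 ∈ ctx.Uplus
      have hX := ctx.X_mem_Uplus y.1.1 y.2.1 y.1.2 y.2.2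
      have := ctx.Uplus.smul_mem (ctx.negP a * ctx.posP b') hX
      rwa [smul_eq_mul] at this
  have := hle hu
  rw [Submodule.mem_sup] at this
  obtain ⟨x, hx, p, hp, rfl⟩ := this
  exact ⟨x, hx, by simpa using hp⟩

end ADEContext
namespace ADEContext

variable (ctx : ADEContext)

lemma csmul_mem (P : Submodule ctx.U ctx.U) (c : ℂ) {u : ctx.U} (hu : u ∈ P) : c • u ∈ P := by
  rw [Algebra.smul_def, ← smul_eq_mul]
  exact P.smul_mem _ hu

lemma Uplus_le_Ii (i : Fin ctx.l) : ctx.Uplus ≤ ctx.Ii i :=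
  le_trans le_sup_right (le_sup_left : ctx.I0 ≤ ctx.Ii i)

lemma Jideal_le_Ii (i : Fin ctx.l) : ctx.Jideal ≤ ctx.Ii i :=
  le_trans le_sup_left (le_sup_left : ctx.I0 ≤ ctx.Ii i)

lemma Xgen_mem_Ii (i : Fin ctx.l) : ctx.X (ctx.sroot i) (-1) ∈ ctx.Ii i :=
  Submodule.mem_sup_right (Submodule.subset_span (Set.mem_singleton _))

lemma mul_mem_Ii (i : Fin ctx.l) (w : ctx.U) {u : ctx.U} (hu : u ∈ ctx.Ii i) :
    w * u ∈ ctx.Ii i := by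
  rw [← smul_eq_mul]
  exact (ctx.Ii i).smul_mem _ hu

lemma sum_single_eq_one (jj : Fin ctx.l) : (∑ j, (Pi.single jj (1 : ℤ) : Fin ctx.l → ℤ) j) = 1 := by
  rw [Finset.sum_pi_single']
  simp

lemma sum_pos_of_mem_Δ {α : Fin ctx.l → ℤ} (hα : α ∈ ctx.Δ) : 1 ≤ ∑ j, α j := by
  have hne := ctx.Δ_ne_zero α hα
  have hnn := ctx.Δ_nonneg α hα
  obtain ⟨j, hj⟩ : ∃ j, α j ≠ 0 := by
    by_contra h
    push_neg at h
    exact hne (funext h)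
  have h1 : 1 ≤ α j := by have := hnn j; omega
  calc (1 : ℤ) ≤ α j := h1
    _ ≤ ∑ k, α k := Finset.single_le_sum (fun k _ => hnn k) (Finset.mem_univ j)

lemma Xmem_Ii (i : Fin ctx.l) :
    ∀ n : ℕ, ∀ α, α ∈ ctx.Δ → (∑ j, α j).toNat ≤ n →
      ∀ m : ℤ, -(α i) ≤ m → ctx.X α m ∈ ctx.Ii i := by
  intro n
  induction n with
  | zero =>
      intro α hα hn m _
      have := ctx.sum_pos_of_mem_Δ hα
      omega
  | succ n ih =>
      intro α hα hn m hm
      by_cases hm0 : 0 ≤ m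
      · exact ctx.Uplus_le_Ii i (ctx.X_mem_Uplus α hα m hm0)
      by_cases hsimp : ∀ j, α ≠ Pi.single j 1
      · -- non-simple root
        obtain ⟨β, hβ, jj, hαβ⟩ := ctx.Δ_decomp α hα hsimp
        have hαi : α i = β i + (Pi.single jj (1 : ℤ) : Fin ctx.l → ℤ) i := by
          rw [hαβ]; rfl
        have hd : (Pi.single jj (1 : ℤ) : Fin ctx.l → ℤ) i = if i = jj then 1 else 0 :=
          Pi.single_apply jj 1 i
        set d : ℤ := (Pi.single jj (1 : ℤ) : Fin ctx.l → ℤ) i with hdd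
        have hd01 : d = 0 ∨ d = 1 := by rw [hd]; split_ifs <;> simp
        set m₁ : ℤ := max m (-(β i)) with hm₁
        set m₂ : ℤ := m - m₁ with hm₂
        have hm₁β : -(β i) ≤ m₁ := le_max_right _ _
        have hm₂d : -d ≤ m₂ := by
          have h1 : -(β i) ≤ m + d := by omega
          have h2 : m ≤ m + d := by omega
          omega
        -- X β m₁ ∈ Ii by induction
        have hsum : ∑ j, α j = (∑ j, β j) + 1 := by
          rw [hαβ]
          simp only [Pi.add_apply]
          rw [Finset.sum_add_distrib, ctx.sum_single_eq_one jj]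
        have hβsum := ctx.sum_pos_of_mem_Δ hβ
        have hαsum := ctx.sum_pos_of_mem_Δ hα
        have hβn : (∑ j, β j).toNat ≤ n := by omega
        have hXβ : ctx.X β m₁ ∈ ctx.Ii i := ih β hβ hβn m₁ hm₁β
        -- X (single jj) m₂ ∈ Ii
        have hXγ : ctx.X (Pi.single jj 1) m₂ ∈ ctx.Ii i := by
          by_cases hm₂0 : 0 ≤ m₂
          · exact ctx.Uplus_le_Ii i (ctx.X_mem_Uplus _ (ctx.simple_mem jj) m₂ hm₂0)
          · have hd1 : d = 1 := by omega
            have hij : i = jj := by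
              by_contra hne
              rw [hd, if_neg hne] at hdd
              omega
            have hm₂1 : m₂ = -1 := by omega
            subst hij
            rw [hm₂1]
            exact ctx.Xgen_mem_Ii i
        -- commutator formula
        have hmem : β + (Pi.single jj 1 : Fin ctx.l → ℤ) ∈ ctx.Δ := by rw [← hαβ]; exact hα
        have hC := ctx.C_ne_zero β hβ _ (ctx.simple_mem jj) hmem
        have hcomm : ctx.X β m₁ * ctx.X (Pi.single jj 1) m₂
            - ctx.X (Pi.single jj 1) m₂ * ctx.X β m₁
            = ctx.C β (Pi.single jj 1) • ctx.X α (m₁ + m₂) := by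
          rw [X, X, ctx.iota_comm, ctx.bracket_x _ hβ _ (ctx.simple_mem jj), if_pos hmem,
            map_smul, hαβ]
          rfl
        have hm12 : m₁ + m₂ = m := by omega
        rw [hm12] at hcomm
        have hXα : ctx.X α m = (ctx.C β (Pi.single jj 1))⁻¹ •
            (ctx.X β m₁ * ctx.X (Pi.single jj 1) m₂
              - ctx.X (Pi.single jj 1) m₂ * ctx.X β m₁) := by
          rw [hcomm, smul_smul, inv_mul_cancel₀ hC, one_smul]
        rw [hXα]
        apply ctx.csmul_mem
        exact Submodule.sub_mem _ (ctx.mul_mem_Ii i _ hXγ) (ctx.mul_mem_Ii i _ hXβ)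
      · -- simple root
        push_neg at hsimp
        obtain ⟨j, hj⟩ := hsimp
        by_cases hij : j = i
        · have hα1 : α i = 1 := by rw [hj, hij]; exact Pi.single_eq_same i 1
          have hm1 : m = -1 := by omega
          have hsr : ctx.sroot i = α := by rw [hj, hij]; rfl
          rw [hm1, ← hsr]
          exact ctx.Xgen_mem_Ii i
        · have hα0 : α i = 0 := by
            rw [hj]
            exact Pi.single_eq_of_ne (fun h => hij h.symm) 1
          omega

end ADEContext
namespace ADEContext

variable (ctx : ADEContext)

lemma charVal_sroot (νu : Fin ctx.l → ℂˣ) (j : Fin ctx.l) :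
    ctx.charVal νu (ctx.sroot j) = ((νu j : ℂˣ) : ℂ) := by
  have h2 : (∏ x, νu x ^ ctx.sroot j x) = ∏ x, (if x = j then νu j else 1) :=
    Finset.prod_congr rfl fun k _ => by
      rcases eq_or_ne k j with rfl | hk
      · have : ctx.sroot k k = 1 := Pi.single_eq_same k 1
        rw [this]
        simp
      · have : ctx.sroot j k = 0 := Pi.single_eq_of_ne hk 1
        rw [this]
        simp [hk]
  rw [charVal, h2]
  norm_cast
  simp

lemma sroot_mem (j : Fin ctx.l) : ctx.sroot j ∈ ctx.Δ := ctx.simple_mem j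

lemma bracket_simple_self (j : Fin ctx.l) (m n : ℤ) :
    ⁅ctx.x (ctx.sroot j) m, ctx.x (ctx.sroot j) n⁆ = 0 := by
  rw [sroot, ctx.bracket_x _ (ctx.simple_mem j) _ (ctx.simple_mem j), if_neg]
  intro hmem
  exact ((ctx.sum_simple_mem_iff j j).1 hmem).1 rfl

lemma X_simple_comm (j : Fin ctx.l) (m n : ℤ) :
    ctx.X (ctx.sroot j) m * ctx.X (ctx.sroot j) n
      = ctx.X (ctx.sroot j) n * ctx.X (ctx.sroot j) m := by
  have h := ctx.iota_comm (ctx.x (ctx.sroot j) m) (ctx.x (ctx.sroot j) n)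
  rw [ctx.bracket_simple_self j m n, map_zero, sub_eq_zero] at h
  exact h

lemma tau_R_mem (i : Fin ctx.l) (νu : Fin ctx.l → ℂˣ) (τ : ctx.U ≃ₐ[ℂ] ctx.U)
    (hτ : ∀ α ∈ ctx.Δ, ∀ m : ℤ, τ (ctx.X α m) = ctx.charVal νu α • ctx.X α (m - α i))
    (j : Fin ctx.l) (t : ℤ) (htt : 2 ≤ t) : τ (ctx.R j t) ∈ ctx.Ii i := by
  set ν : ℂ := ctx.charVal νu (ctx.sroot j) with hν
  have hτX : ∀ m : ℤ, τ (ctx.X (ctx.sroot j) m)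
      = ν • ctx.X (ctx.sroot j) (m - ctx.sroot j i) :=
    fun m => hτ _ (ctx.sroot_mem j) m
  by_cases hij : i = j
  · -- the shifted case
    subst hij
    have hd : ctx.sroot i i = 1 := Pi.single_eq_same i 1
    have heq : τ (ctx.R i t) = (ν * ν) •
        ∑ m ∈ Finset.Icc (1 - t) (-1 : ℤ),
          ctx.X (ctx.sroot i) (m - 1) * ctx.X (ctx.sroot i) (-t - m - 1) := by
      rw [R, map_sum, Finset.smul_sum]
      apply Finset.sum_congr rfl
      intro m _
      rw [map_mul, hτX, hτX, hd, smul_mul_assoc, mul_smul_comm, smul_smul]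
    have hre : ∑ m ∈ Finset.Icc (1 - t) (-1 : ℤ),
          ctx.X (ctx.sroot i) (m - 1) * ctx.X (ctx.sroot i) (-t - m - 1)
        = ∑ m ∈ Finset.Icc (-t) (-2 : ℤ),
          ctx.X (ctx.sroot i) m * ctx.X (ctx.sroot i) (-t - 2 - m) := by
      apply Finset.sum_nbij' (fun m => m - 1) (fun m => m + 1)
      · intro m hm; simp only [Finset.mem_Icc] at *; omega
      · intro m hm; simp only [Finset.mem_Icc] at *; omega
      · intro m _; omega
      · intro m _; omega
      · intro m _
        congr 1
        congr 1
        omega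
    have hsplit : (Finset.Icc (-1 - t) (-1 : ℤ))
        = insert (-1 : ℤ) (insert (-1 - t) (Finset.Icc (-t) (-2 : ℤ))) := by
      apply Finset.ext
      intro z
      simp only [Finset.mem_Icc, Finset.mem_insert]
      omega
    have hR2 : ctx.R i (t + 2)
        = ctx.X (ctx.sroot i) (-1) * ctx.X (ctx.sroot i) (-t - 1)
          + ctx.X (ctx.sroot i) (-1 - t) * ctx.X (ctx.sroot i) (-1)
          + ∑ m ∈ Finset.Icc (-t) (-2 : ℤ),
              ctx.X (ctx.sroot i) m * ctx.X (ctx.sroot i) (-t - 2 - m) := by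
      rw [R]
      have harg : (1 : ℤ) - (t + 2) = -1 - t := by ring
      rw [harg]
      rw [hsplit]
      rw [Finset.sum_insert (by simp only [Finset.mem_insert, Finset.mem_Icc]; omega),
        Finset.sum_insert (by simp only [Finset.mem_Icc]; omega)]
      have h1 : -(t + 2) - (-1 : ℤ) = -t - 1 := by ring
      have h2 : -(t + 2) - (-1 - t : ℤ) = -1 := by ring
      rw [h1, h2, ← add_assoc]
      congr 1
      apply Finset.sum_congr rfl
      intro m _
      congr 1
      congr 1
      ring
    have hmemIi : ∑ m ∈ Finset.Icc (-t) (-2 : ℤ),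
        ctx.X (ctx.sroot i) m * ctx.X (ctx.sroot i) (-t - 2 - m) ∈ ctx.Ii i := by
      have e1 : ctx.R i (t + 2) ∈ ctx.Ii i :=
        ctx.Jideal_le_Ii i (Submodule.subset_span ⟨i, t + 2, by omega, rfl⟩)
      have e2 : ctx.X (ctx.sroot i) (-1) * ctx.X (ctx.sroot i) (-t - 1) ∈ ctx.Ii i := by
        rw [ctx.X_simple_comm]
        exact ctx.mul_mem_Ii i _ (ctx.Xgen_mem_Ii i)
      have e3 : ctx.X (ctx.sroot i) (-1 - t) * ctx.X (ctx.sroot i) (-1) ∈ ctx.Ii i :=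
        ctx.mul_mem_Ii i _ (ctx.Xgen_mem_Ii i)
      have : ∑ m ∈ Finset.Icc (-t) (-2 : ℤ),
          ctx.X (ctx.sroot i) m * ctx.X (ctx.sroot i) (-t - 2 - m)
          = ctx.R i (t + 2)
            - ctx.X (ctx.sroot i) (-1) * ctx.X (ctx.sroot i) (-t - 1)
            - ctx.X (ctx.sroot i) (-1 - t) * ctx.X (ctx.sroot i) (-1) := by
        rw [hR2]; abel
      rw [this]
      exact Submodule.sub_mem _ (Submodule.sub_mem _ e1 e2) e3
    rw [heq, hre]
    exact ctx.csmul_mem _ _ hmemIi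
  · -- the unshifted case
    have hd : ctx.sroot j i = 0 := Pi.single_eq_of_ne hij 1
    have heq : τ (ctx.R j t) = (ν * ν) • ctx.R j t := by
      rw [R, map_sum, Finset.smul_sum]
      apply Finset.sum_congr rfl
      intro m _
      rw [map_mul, hτX, hτX, hd, sub_zero, sub_zero, smul_mul_assoc, mul_smul_comm, smul_smul]
    rw [heq]
    exact ctx.csmul_mem _ _ (ctx.Jideal_le_Ii i (Submodule.subset_span ⟨j, t, htt, rfl⟩))

lemma tau_I0 (i : Fin ctx.l) (νu : Fin ctx.l → ℂˣ) (τ : ctx.U ≃ₐ[ℂ] ctx.U)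
    (hτ : ∀ α ∈ ctx.Δ, ∀ m : ℤ, τ (ctx.X α m) = ctx.charVal νu α • ctx.X α (m - α i)) :
    ∀ u ∈ ctx.I0, τ u ∈ ctx.Ii i := by
  have hJ : ∀ u ∈ ctx.Jideal, τ u ∈ ctx.Ii i := by
    intro u hu
    induction hu using Submodule.span_induction with
    | mem u hu =>
        obtain ⟨j, t, htt, rfl⟩ := hu
        exact ctx.tau_R_mem i νu τ hτ j t htt
    | zero => rw [map_zero]; exact Submodule.zero_mem _
    | add u v _ _ hu hv => rw [map_add]; exact Submodule.add_mem _ hu hv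
    | smul r u _ hu =>
        rw [smul_eq_mul, map_mul, ← smul_eq_mul]
        exact (ctx.Ii i).smul_mem _ hu
  have hP : ∀ u ∈ ctx.Uplus, τ u ∈ ctx.Ii i := by
    intro u hu
    induction hu using Submodule.span_induction with
    | mem u hu =>
        obtain ⟨α, hα, m, hm, rfl⟩ := hu
        rw [hτ α hα m]
        apply ctx.csmul_mem
        exact ctx.Xmem_Ii i (∑ j, α j).toNat α hα le_rfl (m - α i)
          (by have := ctx.Δ_nonneg α hα i; omega)
    | zero => rw [map_zero]; exact Submodule.zero_mem _
    | add u v _ _ hu hv => rw [map_add]; exact Submodule.add_mem _ hu hv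
    | smul r u _ hu =>
        rw [smul_eq_mul, map_mul, ← smul_eq_mul]
        exact (ctx.Ii i).smul_mem _ hu
  intro u hu
  rw [I0, Submodule.mem_sup] at hu
  obtain ⟨a, ha, b, hb, rfl⟩ := hu
  rw [map_add]
  exact Submodule.add_mem _ (hJ a ha) (hP b hb)

end ADEContext
namespace ADEContext

variable (ctx : ADEContext)

noncomputable def mkC : ctx.U →ₗ[ℂ] (ctx.U ⧸ ctx.Uplus) :=
  ctx.Uplus.mkQ.restrictScalars ℂ

@[simp] lemma mkC_apply (u : ctx.U) : ctx.mkC u = Submodule.Quotient.mk u := rfl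

noncomputable def Asub : Submodule ℂ ctx.U :=
  Subalgebra.toSubmodule (Algebra.adjoin ℂ ctx.negGen)

lemma mem_Asub {a : ctx.U} : a ∈ ctx.Asub ↔ a ∈ Algebra.adjoin ℂ ctx.negGen := Iff.rfl

noncomputable def phi : ctx.Asub →ₗ[ℂ] (ctx.U ⧸ ctx.Uplus) :=
  ctx.mkC.comp ctx.Asub.subtype

@[simp] lemma phi_apply (a : ctx.Asub) : ctx.phi a = Submodule.Quotient.mk (a : ctx.U) := rfl

lemma phi_bij : Function.Bijective ctx.phi := by
  constructor
  · intro a b hab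
    have h : Submodule.Quotient.mk (a : ctx.U) = (Submodule.Quotient.mk (b : ctx.U) :
        ctx.U ⧸ ctx.Uplus) := hab
    rw [Submodule.Quotient.eq] at h
    have hd : (a : ctx.U) - b ∈ Algebra.adjoin ℂ ctx.negGen :=
      Subalgebra.sub_mem _ (ctx.mem_Asub.1 a.2) (ctx.mem_Asub.1 b.2)
    have := ctx.adjoin_inter_Uplus _ hd h
    exact Subtype.ext (sub_eq_zero.1 this)
  · intro w
    obtain ⟨u, rfl⟩ := Submodule.Quotient.mk_surjective ctx.Uplus w
    obtain ⟨a, ha, hua⟩ := ctx.decomp u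
    refine ⟨⟨a, ctx.mem_Asub.2 ha⟩, ?_⟩
    rw [phi_apply]
    exact (Submodule.Quotient.eq ctx.Uplus).2 (by simpa using (ctx.Uplus.neg_mem hua))

noncomputable def eqv : ctx.Asub ≃ₗ[ℂ] (ctx.U ⧸ ctx.Uplus) :=
  LinearEquiv.ofBijective ctx.phi ctx.phi_bij

lemma eqv_symm_mk {a : ctx.U} (ha : a ∈ Algebra.adjoin ℂ ctx.negGen) :
    ctx.eqv.symm (Submodule.Quotient.mk a) = ⟨a, ctx.mem_Asub.2 ha⟩ := by
  rw [LinearEquiv.symm_apply_eq]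
  rfl

/-- the map `ê` -/
noncomputable def ehat (τ : ctx.U ≃ₐ[ℂ] ctx.U) :
    (ctx.U ⧸ ctx.Uplus) →ₗ[ℂ] (ctx.U ⧸ ctx.Uplus) :=
  (ctx.mkC.comp ((τ.toLinearMap).comp ctx.Asub.subtype)).comp ctx.eqv.symm.toLinearMap

lemma ehat_apply (τ : ctx.U ≃ₐ[ℂ] ctx.U) (w : ctx.U ⧸ ctx.Uplus) :
    ctx.ehat τ w = Submodule.Quotient.mk (τ ((ctx.eqv.symm w : ctx.Asub) : ctx.U)) := rfl

lemma ehat_mk (τ : ctx.U ≃ₐ[ℂ] ctx.U) {a : ctx.U} (ha : a ∈ Algebra.adjoin ℂ ctx.negGen) :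
    ctx.ehat τ (Submodule.Quotient.mk a) = Submodule.Quotient.mk (τ a) := by
  rw [ehat_apply, ctx.eqv_symm_mk ha]

end ADEContext
end LieLocal

/-- (Corollary 3.4)  Let `W^N = U(𝔫̄)/U(𝔫̄)𝔫̄₊`, a left `U(𝔫̄)`-module, and let
`v = 1 + U(𝔫̄)𝔫̄₊ ∈ W^N` (the principal subspace of the generalized Verma module).  Then for
every `i = 1, …, l` and every character `ν : Q → ℂ^×` (determined by its values
`νu j = ν(α_j)`), there is a unique `ℂ`-linear map `ê : W^N → W^N` such that
`ê(a · v) = τ_{λ_i,ν}(a) · v` for all `a ∈ U(𝔫̄₋)` (the subalgebra of `U(𝔫̄)` generated by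
the negative modes `x_α(m)`, `m ≤ -1`, i.e. the canonical image of `U(𝔫̄₋)`), and this map
satisfies `ê(I_{λ_0} · v) ⊆ I_{λ_i} · v`.  Here `τ` is the extension to `U(𝔫̄)` of
`τ_{λ_i,ν}`, acting on generators by `x_α(m) ↦ ν(α) x_α(m - α^i)`. -/
theorem exists_unique_lifted_map_ehat (ctx : ADEContext) (i : Fin ctx.l)
    (νu : Fin ctx.l → ℂˣ) (τ : ctx.U ≃ₐ[ℂ] ctx.U)
    (hτ : ∀ α ∈ ctx.Δ, ∀ m : ℤ,
      τ (ctx.X α m) = ctx.charVal νu α • ctx.X α (m - α i)) :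
    ∃ e : (ctx.U ⧸ ctx.Uplus) →ₗ[ℂ] (ctx.U ⧸ ctx.Uplus),
      ((∀ a ∈ Algebra.adjoin ℂ {u : ctx.U | ∃ α ∈ ctx.Δ, ∃ m : ℤ, m ≤ -1 ∧ u = ctx.X α m},
          e (a • (Submodule.Quotient.mk (1 : ctx.U) : ctx.U ⧸ ctx.Uplus)) =
            τ a • (Submodule.Quotient.mk (1 : ctx.U) : ctx.U ⧸ ctx.Uplus)) ∧
       ∀ u ∈ ctx.I0,
          e (Submodule.Quotient.mk u) ∈ Submodule.map ctx.Uplus.mkQ (ctx.Ii i)) ∧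
      ∀ e' : (ctx.U ⧸ ctx.Uplus) →ₗ[ℂ] (ctx.U ⧸ ctx.Uplus),
        (∀ a ∈ Algebra.adjoin ℂ {u : ctx.U | ∃ α ∈ ctx.Δ, ∃ m : ℤ, m ≤ -1 ∧ u = ctx.X α m},
          e' (a • (Submodule.Quotient.mk (1 : ctx.U) : ctx.U ⧸ ctx.Uplus)) =
            τ a • (Submodule.Quotient.mk (1 : ctx.U) : ctx.U ⧸ ctx.Uplus)) →
        e' = e := by

  classical
  refine ⟨ctx.ehat τ, ⟨?_, ?_⟩, ?_⟩
  · intro a ha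
    have h1 : a • (Submodule.Quotient.mk (1 : ctx.U) : ctx.U ⧸ ctx.Uplus)
        = Submodule.Quotient.mk a := by
      rw [← Submodule.Quotient.mk_smul, smul_eq_mul, mul_one]
    have h2 : τ a • (Submodule.Quotient.mk (1 : ctx.U) : ctx.U ⧸ ctx.Uplus)
        = Submodule.Quotient.mk (τ a) := by
      rw [← Submodule.Quotient.mk_smul, smul_eq_mul, mul_one]
    rw [h1, h2]
    exact ctx.ehat_mk τ ha
  · intro u hu
    rw [ctx.ehat_apply τ]
    set a : ctx.U := ((ctx.eqv.symm (Submodule.Quotient.mk u) : ctx.Asub) : ctx.U) with hA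
    have hmk : Submodule.Quotient.mk a
        = (Submodule.Quotient.mk u : ctx.U ⧸ ctx.Uplus) := by
      have := ctx.eqv.apply_symm_apply (Submodule.Quotient.mk u)
      rw [← this]
      rfl
    have hau : a - u ∈ ctx.Uplus := (Submodule.Quotient.eq ctx.Uplus).1 hmk
    have haI0 : a ∈ ctx.I0 := by
      have h1 : a - u ∈ ctx.I0 := Submodule.mem_sup_right hau
      have := Submodule.add_mem ctx.I0 h1 hu
      simpa using this
    have hIi : τ a ∈ ctx.Ii i := ctx.tau_I0 i νu τ hτ a haI0
    exact ⟨τ a, hIi, rfl⟩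
  · intro e' he'
    apply LinearMap.ext
    intro w
    obtain ⟨u, rfl⟩ := Submodule.Quotient.mk_surjective ctx.Uplus w
    set A : ctx.Asub := ctx.eqv.symm (Submodule.Quotient.mk u) with hA
    have hmk : Submodule.Quotient.mk (A : ctx.U)
        = (Submodule.Quotient.mk u : ctx.U ⧸ ctx.Uplus) := by
      have := ctx.eqv.apply_symm_apply (Submodule.Quotient.mk u)
      rw [← this]
      rfl
    have hmem : (A : ctx.U) ∈ Algebra.adjoin ℂ ctx.negGen := ctx.mem_Asub.1 A.2
    have h1 : (A : ctx.U) • (Submodule.Quotient.mk (1 : ctx.U) : ctx.U ⧸ ctx.Uplus)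
        = Submodule.Quotient.mk (A : ctx.U) := by
      rw [← Submodule.Quotient.mk_smul, smul_eq_mul, mul_one]
    have h2 : τ (A : ctx.U) • (Submodule.Quotient.mk (1 : ctx.U) : ctx.U ⧸ ctx.Uplus)
        = Submodule.Quotient.mk (τ (A : ctx.U)) := by
      rw [← Submodule.Quotient.mk_smul, smul_eq_mul, mul_one]
    have he := he' (A : ctx.U) hmem
    rw [h1, hmk, h2] at he
    rw [he, ctx.ehat_apply τ]
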